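/- Let b ∈ M_{m×n}(K) be the rank-r normal form (I_r in the upper-left block, zeros elsewhere). Then R := { x ∈ M_{n×m}(K) : the upper-left r×r block of x is a scalar matrix α I_r } is a solvable ideal of the Lie algebra (M_{n×m}(K), ⟦x,y⟧ = xby − ybx); more precisely, its derived series satisfies R^{(3)} = 0. -/
import Mathlib


/-- For `b` the rank-`r` normal form, the set `R` of matrices whose
upper-left `r×r` block is a scalar matrix `α·I_r` is a solvable ideal of
`(M_{n×m}(K), ⟦x,y⟧ = xby − ybx)`: indeed its derived series satisfies
`R⁽³⁾ = 0` (expressed on the spanning brackets by bilinearity). -/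
theorem R_solvable_ideal {K : Type*} [Field K] [CharZero K] {m n r : ℕ}
    (hrm : r ≤ m) (hrn : r ≤ n)
    (b : Matrix (Fin m) (Fin n) K)
    (hb : ∀ i j, b i j = if ((i : ℕ) = (j : ℕ) ∧ (i : ℕ) < r) then 1 else 0)
    (br : Matrix (Fin n) (Fin m) K → Matrix (Fin n) (Fin m) K → Matrix (Fin n) (Fin m) K)
    (hbr : ∀ x y, br x y = x * b * y - y * b * x)
    (R : Set (Matrix (Fin n) (Fin m) K))
    (hR : R = {x | ∃ α : K, ∀ (i : Fin n) (j : Fin m), (i : ℕ) < r → (j : ℕ) < r →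
        x i j = if (i : ℕ) = (j : ℕ) then α else 0}) :
    (∀ x y, y ∈ R → br x y ∈ R) ∧
    (∀ x₁ ∈ R, ∀ x₂ ∈ R, ∀ x₃ ∈ R, ∀ x₄ ∈ R, ∀ x₅ ∈ R, ∀ x₆ ∈ R, ∀ x₇ ∈ R, ∀ x₈ ∈ R,
      br (br (br x₁ x₂) (br x₃ x₄)) (br (br x₅ x₆) (br x₇ x₈)) = 0) := by
  -- entries of `x * b`
  have hbmat : ∀ (x : Matrix (Fin n) (Fin m) K) (i l : Fin n),
      (x * b) i l = if h : (l : ℕ) < r then x i ⟨(l : ℕ), h.trans_le hrm⟩ else 0 := by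
    intro x i l
    rw [Matrix.mul_apply]
    split
    · next h =>
      rw [Finset.sum_eq_single (⟨(l : ℕ), h.trans_le hrm⟩ : Fin m)]
      · rw [hb]; simp [h]
      · intro k _ hk
        rw [hb, if_neg, mul_zero]
        rintro ⟨h1, _⟩
        exact hk (Fin.ext h1)
      · simp
    · next h =>
      apply Finset.sum_eq_zero
      intro k _
      rw [hb, if_neg, mul_zero]
      rintro ⟨h1, h2⟩
      exact h (h1 ▸ h2)
  -- key: bracket with an element of R has vanishing upper-left block
  have key : ∀ x y, y ∈ R → ∀ (i : Fin n) (j : Fin m), (i : ℕ) < r → (j : ℕ) < r →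
      br x y i j = 0 := by
    intro x y hy i j hi hj
    rw [hR] at hy
    obtain ⟨α, hα⟩ := hy
    have h1 : (x * b * y) i j = α * x i j := by
      rw [Matrix.mul_apply]
      rw [Finset.sum_eq_single (⟨(j : ℕ), hj.trans_le hrn⟩ : Fin n)]
      · rw [hbmat]
        rw [dif_pos (show ((⟨(j : ℕ), hj.trans_le hrn⟩ : Fin n) : ℕ) < r from hj)]
        have hjj : (⟨(j : ℕ), hj.trans_le hrm⟩ : Fin m) = j := Fin.ext rfl
        rw [hα _ j hj hj, if_pos rfl]
        rw [show (x i ⟨(j : ℕ), hj.trans_le hrm⟩ : K) = x i j from by rw [hjj]]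
        ring
      · intro l _ hl
        rw [hbmat]
        split
        · next h =>
          rw [hα l j h hj, if_neg, mul_zero]
          intro hc
          exact hl (Fin.ext hc)
        · exact zero_mul _
      · simp
    have h2 : (y * b * x) i j = α * x i j := by
      rw [Matrix.mul_apply]
      rw [Finset.sum_eq_single i]
      · rw [hbmat]
        rw [dif_pos hi]
        rw [hα i ⟨(i : ℕ), hi.trans_le hrm⟩ hi hi, if_pos rfl]
      · intro l _ hl
        rw [hbmat]
        split
        · next h =>
          rw [hα i ⟨(l : ℕ), h.trans_le hrm⟩ hi h, if_neg, zero_mul]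
          intro hc
          exact hl (Fin.ext hc.symm)
        · exact zero_mul _
      · simp
    rw [hbr, Matrix.sub_apply, h1, h2, sub_self]
  -- product vanishing for zero-upper-block matrices
  have zprod : ∀ w w' : Matrix (Fin n) (Fin m) K,
      (∀ (i : Fin n) (j : Fin m), (i : ℕ) < r → (j : ℕ) < r → w i j = 0) →
      (∀ (i : Fin n) (j : Fin m), (i : ℕ) < r → (j : ℕ) < r → w' i j = 0) →
      (w * b) * (w' * b) = 0 := by
    intro w w' hw hw'
    ext i j
    rw [Matrix.mul_apply, Matrix.zero_apply]
    apply Finset.sum_eq_zero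
    intro l _
    rw [hbmat, hbmat]
    split
    · next hl =>
      split
      · next hj =>
        rw [hw' l ⟨(j : ℕ), hj.trans_le hrm⟩ hl hj, mul_zero]
      · exact mul_zero _
    · exact zero_mul _
  -- level-2 brackets kill b on the right
  have step2 : ∀ w w' : Matrix (Fin n) (Fin m) K,
      (∀ (i : Fin n) (j : Fin m), (i : ℕ) < r → (j : ℕ) < r → w i j = 0) →
      (∀ (i : Fin n) (j : Fin m), (i : ℕ) < r → (j : ℕ) < r → w' i j = 0) →
      br w w' * b = 0 := by
    intro w w' hw hw'
    rw [hbr, Matrix.sub_mul, Matrix.mul_assoc (w * b) w' b,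
      Matrix.mul_assoc (w' * b) w b, zprod w w' hw hw', zprod w' w hw' hw, sub_self]
  -- if u·b = 0 and u'·b = 0 then the bracket vanishes
  have step3 : ∀ u u' : Matrix (Fin n) (Fin m) K,
      u * b = 0 → u' * b = 0 → br u u' = 0 := by
    intro u u' hu hu'
    rw [hbr, hu, hu', Matrix.zero_mul, Matrix.zero_mul, sub_self]
  constructor
  · intro x y hy
    rw [hR]
    exact ⟨0, fun i j hi hj => by rw [key x y hy i j hi hj, ite_self]⟩
  · intro x₁ h₁ x₂ h₂ x₃ h₃ x₄ h₄ x₅ h₅ x₆ h₆ x₇ h₇ x₈ h₈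
    exact step3 _ _
      (step2 _ _ (key x₁ x₂ h₂) (key x₃ x₄ h₄))
      (step2 _ _ (key x₅ x₆ h₆) (key x₇ x₈ h₈))
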